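/- Let J be the two-sided ideal of A generated by the pre-Lie associator elements x·(y·z) − (x·y)·z − y·(x·z) + (y·x)·z for x, y, z ∈ A. Then every monomial σ ∈ FreeMagma E that does not have nondecreasing branches belongs to T(J), where T(J) is taken with respect to the order ≼. -/

import Mathlib

/-- The additive extension of the degree function `d : E → ℕ` to the free magma. -/
def FreeMagma.mdeg {E : Type*} (d : E → ℕ) : FreeMagma E → ℕ
  | .of a => d a
  | .mul x y => FreeMagma.mdeg d x + FreeMagma.mdeg d y

/-- The number of branches: `b a = 0` on generators and `b (x·y) = b y + 1`. -/
def FreeMagma.nbranch {E : Type*} : FreeMagma E → ℕ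
  | .of _ => 0
  | .mul _ y => FreeMagma.nbranch y + 1

/-- The list of branches: `ℓ a = []` and `ℓ (x·y) = x :: ℓ y`. -/
def FreeMagma.branchList {E : Type*} : FreeMagma E → List (FreeMagma E)
  | .of _ => []
  | .mul x y => x :: FreeMagma.branchList y

/-- The root: `r a = a` and `r (x·y) = r y`. -/
def FreeMagma.rootOf {E : Type*} : FreeMagma E → E
  | .of a => a
  | .mul _ y => FreeMagma.rootOf y

/-- The strict order `≺` on the free magma (planar `E`-decorated rooted trees):
compare by degree, then by number of branches, then lexicographically on the list of
branches, then by the root decoration. -/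
inductive MagmaLt {E : Type*} [LT E] (d : E → ℕ) : FreeMagma E → FreeMagma E → Prop
  | deg {σ τ : FreeMagma E} : FreeMagma.mdeg d σ < FreeMagma.mdeg d τ → MagmaLt d σ τ
  | branches {σ τ : FreeMagma E} : FreeMagma.mdeg d σ = FreeMagma.mdeg d τ →
      FreeMagma.nbranch σ < FreeMagma.nbranch τ → MagmaLt d σ τ
  | lex {σ τ : FreeMagma E} : FreeMagma.mdeg d σ = FreeMagma.mdeg d τ →
      FreeMagma.nbranch σ = FreeMagma.nbranch τ →
      List.Lex (MagmaLt d) (FreeMagma.branchList σ) (FreeMagma.branchList τ) → MagmaLt d σ τ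
  | root {σ τ : FreeMagma E} : FreeMagma.mdeg d σ = FreeMagma.mdeg d τ →
      FreeMagma.nbranch σ = FreeMagma.nbranch τ →
      FreeMagma.branchList σ = FreeMagma.branchList τ →
      FreeMagma.rootOf σ < FreeMagma.rootOf τ → MagmaLt d σ τ

/-- The monomial corresponding to an element of the free magma, inside the free
non-unital non-associative algebra. -/
noncomputable def magmaMonomial {E : Type*} (z : FreeMagma E) :
    FreeNonUnitalNonAssocAlgebra ℚ E :=
  MonoidAlgebra.single z (1 : ℚ)

/-- A ℚ-submodule of the magma algebra which is stable under left and right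
multiplication by arbitrary elements: a two-sided ideal. -/
def IsTwoSidedIdealSubmodule {E : Type*}
    (I : Submodule ℚ (FreeNonUnitalNonAssocAlgebra ℚ E)) : Prop :=
  ∀ a x : FreeNonUnitalNonAssocAlgebra ℚ E, x ∈ I → a * x ∈ I ∧ x * a ∈ I

/-- The smallest two-sided ideal (ℚ-submodule closed under left and right multiplication)
containing a given set. -/
noncomputable def twoSidedIdealGen {E : Type*} (S : Set (FreeNonUnitalNonAssocAlgebra ℚ E)) :
    Submodule ℚ (FreeNonUnitalNonAssocAlgebra ℚ E) :=
  sInf {I | IsTwoSidedIdealSubmodule I ∧ S ⊆ I}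

/-- `z` is the `≼`-maximal term of `f`: it lies in the support of `f` and strictly
dominates every other monomial of the support. -/
def IsMaxTermWrt {E : Type*} [LT E] (d : E → ℕ)
    (f : FreeNonUnitalNonAssocAlgebra ℚ E) (z : FreeMagma E) : Prop :=
  z ∈ f.coeff.support ∧ ∀ w ∈ f.coeff.support, w ≠ z → MagmaLt d w z

/-- `T(I)` with respect to the order `≼`: the set of maximal terms of (nonzero)
elements of `I`. -/
def maxTermSetWrt {E : Type*} [LT E] (d : E → ℕ)
    (I : Submodule ℚ (FreeNonUnitalNonAssocAlgebra ℚ E)) : Set (FreeMagma E) :=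
  {z | ∃ f ∈ I, IsMaxTermWrt d f z}

/-- The set of pre-Lie associator elements `x·(y·z) − (x·y)·z − y·(x·z) + (y·x)·z`
for `x, y, z` in the magma algebra. -/
def preLieAssocSet (E : Type*) : Set (FreeNonUnitalNonAssocAlgebra ℚ E) :=
  {w | ∃ x y z : FreeNonUnitalNonAssocAlgebra ℚ E,
    w = x * (y * z) - (x * y) * z - y * (x * z) + (y * x) * z}

/-- A monomial has nondecreasing branches if at every vertex the branches are displayed
in `≼`-nondecreasing order from left to right. -/
def HasNondecreasingBranches {E : Type*} [LT E] (d : E → ℕ) : FreeMagma E → Prop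
  | .of _ => True
  | .mul x y => HasNondecreasingBranches d x ∧ HasNondecreasingBranches d y ∧
      ∀ u v : FreeMagma E, y = u * v → (MagmaLt d x u ∨ x = u)

section MyAux

open FreeMagma

variable {E : Type*}

@[simp] lemma FreeMagma.mdeg_mul (d : E → ℕ) (x y : FreeMagma E) :
    FreeMagma.mdeg d (x * y) = FreeMagma.mdeg d x + FreeMagma.mdeg d y := rfl

@[simp] lemma FreeMagma.nbranch_mul (x y : FreeMagma E) :
    FreeMagma.nbranch (x * y) = FreeMagma.nbranch y + 1 := rfl

@[simp] lemma FreeMagma.branchList_mul (x y : FreeMagma E) :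
    FreeMagma.branchList (x * y) = x :: FreeMagma.branchList y := rfl

@[simp] lemma FreeMagma.rootOf_mul (x y : FreeMagma E) :
    FreeMagma.rootOf (x * y) = FreeMagma.rootOf y := rfl

lemma FreeMagma.mul.sizeOf_spec (x y : FreeMagma E) :
    sizeOf (FreeMagma.mul x y) = 1 + sizeOf x + sizeOf y := rfl

lemma FreeMagma.sizeOf_lt_of_mem_branchList :
    ∀ (σ : FreeMagma E) (a : FreeMagma E), a ∈ σ.branchList → sizeOf a < sizeOf σ
  | .of _, a, ha => by simp [FreeMagma.branchList] at ha
  | .mul x y, a, ha => by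
      rw [FreeMagma.branchList] at ha
      rcases List.mem_cons.mp ha with rfl | h
      · simp only [FreeMagma.mul.sizeOf_spec]; omega
      · have := FreeMagma.sizeOf_lt_of_mem_branchList y a h
        simp only [FreeMagma.mul.sizeOf_spec]; omega

lemma myLexTrichotomy {α : Type*} (r : α → α → Prop) :
    ∀ (l₁ l₂ : List α), (∀ a ∈ l₁, ∀ b ∈ l₂, r a b ∨ a = b ∨ r b a) →
      List.Lex r l₁ l₂ ∨ l₁ = l₂ ∨ List.Lex r l₂ l₁
  | [], [], _ => Or.inr (Or.inl rfl)
  | [], _ :: _, _ => Or.inl List.Lex.nil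
  | _ :: _, [], _ => Or.inr (Or.inr List.Lex.nil)
  | a :: l₁, b :: l₂, h => by
      rcases h a (by simp) b (by simp) with hr | rfl | hr
      · exact Or.inl (List.Lex.rel hr)
      · rcases myLexTrichotomy r l₁ l₂
          (fun x hx y hy => h x (by simp [hx]) y (by simp [hy])) with h1 | rfl | h1
        · exact Or.inl (List.Lex.cons h1)
        · exact Or.inr (Or.inl rfl)
        · exact Or.inr (Or.inr (List.Lex.cons h1))
      · exact Or.inr (Or.inr (List.Lex.rel hr))

lemma FreeMagma.eq_of_branchList_rootOf :
    ∀ σ τ : FreeMagma E, σ.branchList = τ.branchList → σ.rootOf = τ.rootOf → σ = τ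
  | .of a, .of b, _, hr => by
      rw [show a = b from hr]
  | .of _, .mul _ _, hl, _ => by simp [FreeMagma.branchList] at hl
  | .mul _ _, .of _, hl, _ => by simp [FreeMagma.branchList] at hl
  | .mul x y, .mul x' y', hl, hr => by
      rw [FreeMagma.branchList, FreeMagma.branchList, List.cons.injEq] at hl
      rw [FreeMagma.rootOf, FreeMagma.rootOf] at hr
      rw [hl.1, FreeMagma.eq_of_branchList_rootOf y y' hl.2 hr]

lemma magmaLt_trichotomy [LinearOrder E] (d : E → ℕ) :
    ∀ σ τ : FreeMagma E, MagmaLt d σ τ ∨ σ = τ ∨ MagmaLt d τ σ := fun σ τ => by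
  rcases lt_trichotomy (FreeMagma.mdeg d σ) (FreeMagma.mdeg d τ) with h | h | h
  · exact Or.inl (.deg h)
  · rcases lt_trichotomy (FreeMagma.nbranch σ) (FreeMagma.nbranch τ) with hb | hb | hb
    · exact Or.inl (.branches h hb)
    · rcases myLexTrichotomy (MagmaLt d) σ.branchList τ.branchList
        (fun a ha b hb' => magmaLt_trichotomy d a b) with hl | hl | hl
      · exact Or.inl (.lex h hb hl)
      · rcases lt_trichotomy σ.rootOf τ.rootOf with hr | hr | hr
        · exact Or.inl (.root h hb hl hr)
        · exact Or.inr (Or.inl (FreeMagma.eq_of_branchList_rootOf σ τ hl hr))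
        · exact Or.inr (Or.inr (.root h.symm hb.symm hl.symm hr))
      · exact Or.inr (Or.inr (.lex h.symm hb.symm hl))
    · exact Or.inr (Or.inr (.branches h.symm hb))
  · exact Or.inr (Or.inr (.deg h))
termination_by σ τ => sizeOf σ + sizeOf τ
decreasing_by
  exact Nat.add_lt_add (FreeMagma.sizeOf_lt_of_mem_branchList σ a ha)
    (FreeMagma.sizeOf_lt_of_mem_branchList τ b hb')

lemma MagmaLt.mdeg_le [LT E] {d : E → ℕ} {σ τ : FreeMagma E} (h : MagmaLt d σ τ) :
    FreeMagma.mdeg d σ ≤ FreeMagma.mdeg d τ := by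
  cases h with
  | deg h => exact h.le
  | branches h _ => exact h.le
  | lex h _ _ => exact h.le
  | root h _ _ _ => exact h.le

lemma MagmaLt.mul_left [LT E] {d : E → ℕ} {σ τ : FreeMagma E} (μ : FreeMagma E)
    (h : MagmaLt d σ τ) : MagmaLt d (μ * σ) (μ * τ) := by
  cases h with
  | deg h => exact .deg (by simp; omega)
  | branches h hb => exact .branches (by simp [h]) (by simp; omega)
  | lex h hb hl => exact .lex (by simp [h]) (by simp [hb]) (by simpa using List.Lex.cons hl)
  | root h hb hl hr => exact .root (by simp [h]) (by simp [hb]) (by simp [hl]) (by simpa using hr)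

lemma MagmaLt.mul_right [LT E] {d : E → ℕ} {σ τ : FreeMagma E} (μ : FreeMagma E)
    (h : MagmaLt d σ τ) : MagmaLt d (σ * μ) (τ * μ) := by
  rcases lt_or_eq_of_le h.mdeg_le with hd | hd
  · exact .deg (by simp; omega)
  · exact .lex (by simp [hd]) (by simp) (by simpa using List.Lex.rel h)

lemma freeMagma_mul_left_injective (μ : FreeMagma E) :
    Function.Injective (fun z : FreeMagma E => μ * z) := by
  intro a b h
  have h' : FreeMagma.mul μ a = FreeMagma.mul μ b := h
  injection h'

lemma freeMagma_mul_right_injective (μ : FreeMagma E) :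
    Function.Injective (fun z : FreeMagma E => z * μ) := by
  intro a b h
  have h' : FreeMagma.mul a μ = FreeMagma.mul b μ := h
  injection h'

lemma FreeMagma.mul_ne_right : ∀ (a b : FreeMagma E), a * b ≠ b
  | a, .of x, h => by
      have h' : FreeMagma.mul a (.of x) = .of x := h
      cases h'
  | a, .mul b₁ b₂, h => by
      have h' : FreeMagma.mul a (.mul b₁ b₂) = .mul b₁ b₂ := h
      injection h' with h1 h2
      exact FreeMagma.mul_ne_right b₁ b₂ h2

lemma FreeMagma.mul_ne_left : ∀ (a b : FreeMagma E), a * b ≠ a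
  | .of x, b, h => by
      have h' : FreeMagma.mul (.of x) b = .of x := h
      cases h'
  | .mul a₁ a₂, b, h => by
      have h' : FreeMagma.mul (.mul a₁ a₂) b = .mul a₁ a₂ := h
      injection h' with h1 h2
      exact FreeMagma.mul_ne_left a₁ a₂ h1

end MyAux
section MyAux2

variable {E : Type*}

lemma myMonomialMul (a b : FreeMagma E) :
    magmaMonomial a * magmaMonomial b = magmaMonomial (a * b) := by
  simp [magmaMonomial, MonoidAlgebra.single_mul_single]

lemma myMonomialMulEq (μ : FreeMagma E) (f : FreeNonUnitalNonAssocAlgebra ℚ E) :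
    magmaMonomial μ * f = MonoidAlgebra.mapDomain (fun z => μ * z) f := by
  classical
  rw [magmaMonomial, MonoidAlgebra.mul_def, MonoidAlgebra.coeff_single,
    Finsupp.sum_single_index (by simp)]
  apply MonoidAlgebra.coeff_injective
  simp [MonoidAlgebra.mapDomain, Finsupp.mapDomain, MonoidAlgebra.coeff_finsuppSum,
    MonoidAlgebra.coeff_single]

lemma myMulMonomialEq (μ : FreeMagma E) (f : FreeNonUnitalNonAssocAlgebra ℚ E) :
    f * magmaMonomial μ = MonoidAlgebra.mapDomain (fun z => z * μ) f := by
  classical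
  rw [magmaMonomial, MonoidAlgebra.mul_def]
  apply MonoidAlgebra.coeff_injective
  simp [MonoidAlgebra.mapDomain, Finsupp.mapDomain, MonoidAlgebra.coeff_finsuppSum,
    MonoidAlgebra.coeff_single]

lemma myMaxTermMapDomain [LT E] {d : E → ℕ} {g : FreeMagma E → FreeMagma E}
    (hg : Function.Injective g) (hmono : ∀ a b, MagmaLt d a b → MagmaLt d (g a) (g b))
    {f : FreeNonUnitalNonAssocAlgebra ℚ E} {τ : FreeMagma E} (h : IsMaxTermWrt d f τ) :
    IsMaxTermWrt d (MonoidAlgebra.mapDomain g f) (g τ) := by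
  classical
  obtain ⟨hmem, hmax⟩ := h
  change g τ ∈ (Finsupp.mapDomain g f.coeff).support ∧
    ∀ w ∈ (Finsupp.mapDomain g f.coeff).support, w ≠ g τ → MagmaLt d w (g τ)
  refine ⟨?_, ?_⟩
  · rw [Finsupp.mem_support_iff, Finsupp.mapDomain_apply hg]
    exact Finsupp.mem_support_iff.mp hmem
  · intro w hw hne
    obtain ⟨a, ha, rfl⟩ := Finset.mem_image.mp (Finsupp.mapDomain_support hw)
    exact hmono _ _ (hmax a ha fun h' => hne (by rw [h']))

lemma myGenIsIdeal (S : Set (FreeNonUnitalNonAssocAlgebra ℚ E)) :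
    IsTwoSidedIdealSubmodule (twoSidedIdealGen S) := by
  intro a x hx
  rw [twoSidedIdealGen, Submodule.mem_sInf] at hx
  constructor
  · rw [twoSidedIdealGen, Submodule.mem_sInf]
    exact fun I hI => (hI.1 a x (hx I hI)).1
  · rw [twoSidedIdealGen, Submodule.mem_sInf]
    exact fun I hI => (hI.1 a x (hx I hI)).2

lemma mySubsetGen (S : Set (FreeNonUnitalNonAssocAlgebra ℚ E)) :
    S ⊆ ↑(twoSidedIdealGen S) := by
  intro s hs
  rw [SetLike.mem_coe, twoSidedIdealGen, Submodule.mem_sInf]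
  exact fun I hI => hI.2 hs

lemma myFour_apply_self {α : Type*} {A B C D : α} (hAB : A ≠ B) (hAC : A ≠ C)
    (hAD : A ≠ D) :
    ((Finsupp.single A (1:ℚ) - Finsupp.single B 1 - Finsupp.single C 1
      + Finsupp.single D 1 : α →₀ ℚ)) A = 1 := by
  classical
  simp [Finsupp.single_apply, Ne.symm hAB, Ne.symm hAC, Ne.symm hAD]

lemma myFour_apply_other {α : Type*} {A B C D w : α} (h0 : w ≠ A) (h1 : w ≠ B) (h2 : w ≠ C)
    (h3 : w ≠ D) :
    ((Finsupp.single A (1:ℚ) - Finsupp.single B 1 - Finsupp.single C 1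
      + Finsupp.single D 1 : α →₀ ℚ)) w = 0 := by
  classical
  simp [Finsupp.single_apply, Ne.symm h0, Ne.symm h1, Ne.symm h2, Ne.symm h3]

end MyAux2
/-- Every monomial which does not have nondecreasing branches is the maximal term of an
element of the ideal `J` generated by the pre-Lie associators. -/
theorem not_nondecreasing_mem_maxTermSet_preLie_ideal (E : Type*) [LinearOrder E]
    (hwo : WellFoundedLT E) (d : E → ℕ) (hd : ∀ a : E, 1 ≤ d a)
    (hfib : ∀ n : ℕ, {a : E | d a = n}.Finite)
    (href : ∀ a b : E, d a < d b → a < b) :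
    ∀ σ : FreeMagma E, ¬ HasNondecreasingBranches d σ →
      σ ∈ maxTermSetWrt d (twoSidedIdealGen (preLieAssocSet E)) := by
  classical
  have hJideal := myGenIsIdeal (E := E) (preLieAssocSet E)
  have hJsub := mySubsetGen (E := E) (preLieAssocSet E)
  intro σ
  induction σ with
  | ih1 a => intro h; exact (h trivial).elim
  | ih2 x y ihx ihy =>
    intro hnd
    by_cases hx : HasNondecreasingBranches d x
    · by_cases hy : HasNondecreasingBranches d y
      · have hex : ¬ ∀ u v : FreeMagma E, y = u * v → (MagmaLt d x u ∨ x = u) := by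
          intro h; exact hnd ⟨hx, hy, h⟩
        push_neg at hex
        obtain ⟨u, v, rfl, hxu1, hxu2⟩ := hex
        have hux : MagmaLt d u x := by
          rcases magmaLt_trichotomy d x u with h | h | h
          · exact absurd h hxu1
          · exact absurd h hxu2
          · exact h
        refine ⟨magmaMonomial x * (magmaMonomial u * magmaMonomial v)
            - magmaMonomial x * magmaMonomial u * magmaMonomial v
            - magmaMonomial u * (magmaMonomial x * magmaMonomial v)
            + magmaMonomial u * magmaMonomial x * magmaMonomial v,
          hJsub ⟨_, _, _, rfl⟩, ?_⟩
        simp only [myMonomialMul]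
        set A := x * (u * v) with hA
        set B := x * u * v with hB
        set C := u * (x * v) with hC
        set D := u * x * v with hD
        have hAB : A ≠ B := by
          intro h
          have h' : FreeMagma.mul x (FreeMagma.mul u v) = FreeMagma.mul (FreeMagma.mul x u) v := h
          injection h' with h1 h2
          exact FreeMagma.mul_ne_right u v h2
        have hAC : A ≠ C := by
          intro h
          have h' : FreeMagma.mul x (FreeMagma.mul u v) = FreeMagma.mul u (FreeMagma.mul x v) := h
          injection h' with h1 h2
          exact hxu2 h1
        have hAD : A ≠ D := by
          intro h
          have h' : FreeMagma.mul x (FreeMagma.mul u v) = FreeMagma.mul (FreeMagma.mul u x) v := h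
          injection h' with h1 h2
          exact FreeMagma.mul_ne_right u v h2
        have hBC : B ≠ C := by
          intro h
          have h' : FreeMagma.mul (FreeMagma.mul x u) v = FreeMagma.mul u (FreeMagma.mul x v) := h
          injection h' with h1 h2
          exact FreeMagma.mul_ne_right x u h1
        have hBD : B ≠ D := by
          intro h
          have h' : FreeMagma.mul (FreeMagma.mul x u) v = FreeMagma.mul (FreeMagma.mul u x) v := h
          injection h' with h1 h2
          injection h1 with g1 g2
          exact hxu2 g1
        have hCD : C ≠ D := by
          intro h
          have h' : FreeMagma.mul u (FreeMagma.mul x v) = FreeMagma.mul (FreeMagma.mul u x) v := h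
          injection h' with h1 h2
          exact FreeMagma.mul_ne_right x v h2
        refine ⟨?_, ?_⟩
        · rw [Finsupp.mem_support_iff]
          intro hcon
          exact one_ne_zero ((myFour_apply_self hAB hAC hAD).symm.trans hcon)
        · intro w hw hne
          rw [Finsupp.mem_support_iff] at hw
          have hmem : w = B ∨ w = C ∨ w = D := by
            by_contra hc
            push_neg at hc
            obtain ⟨h1, h2, h3⟩ := hc
            exact hw (myFour_apply_other hne h1 h2 h3)
          rcases hmem with rfl | rfl | rfl
          · exact .branches (by simp [hA, hB]; omega) (by simp [hA, hB])
          · refine .lex (by simp [hA, hC]; omega) (by simp [hA, hC]) ?_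
            simp only [hA, hC, FreeMagma.branchList_mul]
            exact List.Lex.rel hux
          · exact .branches (by simp [hA, hD]; omega) (by simp [hA, hD])
      · obtain ⟨f, hf, hmax⟩ := ihy hy
        refine ⟨magmaMonomial x * f, (hJideal _ _ hf).1, ?_⟩
        rw [myMonomialMulEq]
        exact myMaxTermMapDomain (freeMagma_mul_left_injective x)
          (fun a b h => MagmaLt.mul_left x h) hmax
    · obtain ⟨f, hf, hmax⟩ := ihx hx
      refine ⟨f * magmaMonomial y, (hJideal _ _ hf).2, ?_⟩
      rw [myMulMonomialEq]
      exact myMaxTermMapDomain (freeMagma_mul_right_injective y)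
        (fun a b h => MagmaLt.mul_right y h) hmax
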